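/- Let (Z_m)_m be a sequence of solutions on [t', ∞) of a fixed linear nonhomogeneous ODE Z' = B(t)Z + g(t) (B continuous matrix-valued, g continuous), and suppose there are constants K > 0, β > 0 and times t_m → ∞ such that ‖Z_m(t)‖ ≤ K·exp(-β(t-t')) for all t ∈ [t', t_m]. If in addition the initial conditions Z_m(t') are uniformly bounded, then there exists a subsequence with Z_{m_k}(t') converging to some Z₀, and the solution Z of the ODE with Z(t') = Z₀ satisfies ‖Z(t)‖ ≤ K·exp(-β(t-t')) for all t ≥ t'. -/

import Mathlib

open Real Filter

theorem stmt_12 (N : ℕ)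
    (B : ℝ → ((Fin N → ℝ) →L[ℝ] (Fin N → ℝ))) (hB : Continuous B)
    (g : ℝ → Fin N → ℝ) (hg : Continuous g)
    (t' K β : ℝ) (hK : 0 < K) (hβ : 0 < β)
    (Z : ℕ → ℝ → Fin N → ℝ)
    (hsol : ∀ m, ∀ t ≥ t', HasDerivAt (Z m) ((B t) (Z m t) + g t) t)
    (tm : ℕ → ℝ) (htm : Tendsto tm atTop atTop)
    (hbd : ∀ m, ∀ t ∈ Set.Icc t' (tm m), ‖Z m t‖ ≤ K * Real.exp (-β * (t - t')))
    (Cb : ℝ) (hinit : ∀ m, ‖Z m t'‖ ≤ Cb) :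
    ∃ (φ : ℕ → ℕ), StrictMono φ ∧
      ∃ Z₀ : Fin N → ℝ,
        Tendsto (fun k => Z (φ k) t') atTop (nhds Z₀) ∧
        ∃ W : ℝ → Fin N → ℝ, W t' = Z₀ ∧
          (∀ t ≥ t', HasDerivAt W ((B t) (W t) + g t) t) ∧
          ∀ t ≥ t', ‖W t‖ ≤ K * Real.exp (-β * (t - t')) := by
  classical
  obtain ⟨Z₀, -, φ, hφ, hconv⟩ :=
    tendsto_subseq_of_bounded (Metric.isBounded_closedBall (x := (0 : Fin N → ℝ)) (r := Cb))
      (x := fun m => Z m t')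
      (fun m => by simpa [Metric.mem_closedBall, dist_eq_norm] using hinit m)
  have hconv' : Tendsto (fun k => Z (φ k) t') atTop (nhds Z₀) := hconv
  refine ⟨φ, hφ, Z₀, hconv', ?_⟩
  have hφtop : Tendsto (fun k => tm (φ k)) atTop atTop := htm.comp hφ.tendsto_atTop
  have hZcont : ∀ m, ContinuousOn (Z m) (Set.Ici t') := fun m t ht =>
    ((hsol m t ht).continuousAt).continuousWithinAt
  -- Grönwall comparison estimate on compact time intervals
  have key : ∀ b, t' ≤ b → ∃ M : ℝ, 0 ≤ M ∧ ∀ m n, ∀ t ∈ Set.Icc t' b,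
      dist (Z m t) (Z n t) ≤ dist (Z m t') (Z n t') * Real.exp (M * (t - t')) := by
    intro b hb
    obtain ⟨C, hC⟩ := (isCompact_Icc (a := t') (b := b)).exists_bound_of_continuousOn
      hB.continuousOn
    refine ⟨max C 0, le_max_right _ _, ?_⟩
    intro m n
    set v : ℝ → (Fin N → ℝ) → (Fin N → ℝ) := fun t x =>
      B (max t' (min t b)) x + g (max t' (min t b)) with hv_def
    have hvt : ∀ t ∈ Set.Ico t' b, ∀ x, v t x = B t x + g t := by
      intro t ht x
      have hmm : max t' (min t b) = t := by
        rw [min_eq_left ht.2.le, max_eq_right ht.1]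
      simp only [hv_def, hmm]
    have hlip : ∀ t, LipschitzWith (Real.toNNReal (max C 0)) (v t) := by
      intro t
      rw [lipschitzWith_iff_dist_le_mul]
      intro x y
      have hmem : max t' (min t b) ∈ Set.Icc t' b :=
        ⟨le_max_left _ _, max_le hb (min_le_right _ _)⟩
      have h1 : dist (v t x) (v t y) = dist (B (max t' (min t b)) x) (B (max t' (min t b)) y) := by
        simp only [hv_def]
        exact dist_add_right _ _ _
      rw [h1, Real.coe_toNNReal _ (le_max_right C 0)]
      calc dist (B (max t' (min t b)) x) (B (max t' (min t b)) y)
          ≤ ‖B (max t' (min t b))‖ * dist x y := by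
            rw [dist_eq_norm, dist_eq_norm, ← map_sub]
            exact (B _).le_opNorm _
        _ ≤ max C 0 * dist x y := by
            gcongr
            exact (hC _ hmem).trans (le_max_left _ _)
    intro t ht
    have hres := dist_le_of_trajectories_ODE (v := v) hlip
      ((hZcont m).mono Set.Icc_subset_Ici_self)
      (fun s hs => by
        rw [hvt s hs]
        exact (hsol m s hs.1).hasDerivWithinAt)
      ((hZcont n).mono Set.Icc_subset_Ici_self)
      (fun s hs => by
        rw [hvt s hs]
        exact (hsol n s hs.1).hasDerivWithinAt)
      (le_refl (dist (Z m t') (Z n t'))) t ht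
    rwa [Real.coe_toNNReal _ (le_max_right C 0)] at hres
  -- uniform Cauchy on compacts
  have hUC : ∀ b, t' ≤ b → UniformCauchySeqOn (fun k t => Z (φ k) t) atTop (Set.Icc t' b) := by
    intro b hb
    obtain ⟨M, hM0, hM⟩ := key b hb
    rw [Metric.uniformCauchySeqOn_iff]
    intro ε hε
    have hc : CauchySeq (fun k => Z (φ k) t') := hconv'.cauchySeq
    have hpos : 0 < ε / Real.exp (M * (b - t')) := div_pos hε (Real.exp_pos _)
    obtain ⟨Nk, hNk⟩ := Metric.cauchySeq_iff.mp hc _ hpos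
    refine ⟨Nk, fun p hp q hq x hx => ?_⟩
    have h1 := hM (φ p) (φ q) x hx
    have h2 : Real.exp (M * (x - t')) ≤ Real.exp (M * (b - t')) := by
      apply Real.exp_le_exp.mpr
      have := hx.2
      nlinarith [hx.1]
    calc dist (Z (φ p) x) (Z (φ q) x)
        ≤ dist (Z (φ p) t') (Z (φ q) t') * Real.exp (M * (x - t')) := h1
      _ ≤ dist (Z (φ p) t') (Z (φ q) t') * Real.exp (M * (b - t')) := by
          gcongr
      _ < (ε / Real.exp (M * (b - t'))) * Real.exp (M * (b - t')) := by
          have := hNk p hp q hq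
          have := Real.exp_pos (M * (b - t'))
          apply mul_lt_mul_of_pos_right <;> assumption
      _ = ε := div_mul_cancel₀ ε (Real.exp_pos _).ne'
  -- pointwise limit V
  set V : ℝ → Fin N → ℝ := fun t => limUnder atTop (fun k => Z (φ k) t) with hV_def
  have hVt : ∀ t, t' ≤ t → Tendsto (fun k => Z (φ k) t) atTop (nhds (V t)) := by
    intro t ht
    exact ((hUC t ht).cauchySeq (Set.right_mem_Icc.mpr ht)).tendsto_limUnder
  have hVt' : V t' = Z₀ := tendsto_nhds_unique (hVt t' le_rfl) hconv'
  have hVcontIcc : ∀ b, t' ≤ b → ContinuousOn V (Set.Icc t' b) := by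
    intro b hb
    have h1 := (hUC b hb).tendstoUniformlyOn_of_tendsto (fun t ht => hVt t ht.1)
    exact h1.continuousOn (Filter.Frequently.of_forall fun k =>
      (hZcont (φ k)).mono Set.Icc_subset_Ici_self)
  have hVcont : ContinuousOn V (Set.Ici t') := by
    intro t ht
    have ht' : t' ≤ t := ht
    have h1 : ContinuousOn V (Set.Icc t' (t + 1)) := hVcontIcc (t + 1) (by linarith)
    have h2 : ContinuousWithinAt V (Set.Icc t' (t + 1)) t :=
      h1 t ⟨ht', by linarith⟩
    apply h2.mono_of_mem_nhdsWithin
    rw [← Set.Ici_inter_Iic]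
    exact Filter.inter_mem self_mem_nhdsWithin
      (mem_nhdsWithin_of_mem_nhds (Iic_mem_nhds (by linarith)))
  -- integral equation for each Z m
  have hint : ∀ m, ∀ t, t' ≤ t → Z m t = Z m t' + ∫ s in t'..t, (B s (Z m s) + g s) := by
    intro m t ht
    have huIcc : Set.uIcc t' t = Set.Icc t' t := Set.uIcc_of_le ht
    have hci : ContinuousOn (fun s => B s (Z m s) + g s) (Set.Icc t' t) :=
      (hB.continuousOn.clm_apply ((hZcont m).mono Set.Icc_subset_Ici_self)).add hg.continuousOn
    have heq := intervalIntegral.integral_eq_sub_of_hasDerivAt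
      (f := Z m) (f' := fun s => B s (Z m s) + g s)
      (fun s hs => hsol m s (huIcc ▸ hs).1)
      (ContinuousOn.intervalIntegrable (huIcc ▸ hci))
    rw [heq]
    abel
  -- integral equation for V via dominated convergence
  have hVint : ∀ t, t' ≤ t → V t = Z₀ + ∫ s in t'..t, (B s (V s) + g s) := by
    intro t ht
    have huIoc : Set.uIoc t' t = Set.Ioc t' t := Set.uIoc_of_le ht
    have hlim1 : Tendsto (fun k => Z (φ k) t) atTop (nhds (V t)) := hVt t ht
    have hIlim : Tendsto (fun k => ∫ s in t'..t, (B s (Z (φ k) s) + g s)) atTop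
        (nhds (∫ s in t'..t, (B s (V s) + g s))) := by
      apply intervalIntegral.tendsto_integral_filter_of_dominated_convergence
        (bound := fun s => ‖B s‖ * K + ‖g s‖)
      · refine Filter.Eventually.of_forall fun k => ?_
        have hc : ContinuousOn (fun s => B s (Z (φ k) s) + g s) (Set.Ioc t' t) :=
          ((hB.continuousOn.clm_apply ((hZcont (φ k)).mono
            (fun x hx => le_of_lt hx.1))).add hg.continuousOn)
        rw [huIoc]
        exact hc.aestronglyMeasurable measurableSet_Ioc
      · filter_upwards [hφtop.eventually_ge_atTop t] with k hk
        refine Filter.Eventually.of_forall fun s hs => ?_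
        rw [huIoc] at hs
        have hZs : ‖Z (φ k) s‖ ≤ K := by
          have h1 := hbd (φ k) s ⟨hs.1.le, hs.2.trans hk⟩
          have h2 : Real.exp (-β * (s - t')) ≤ 1 := by
            apply Real.exp_le_one_iff.mpr
            nlinarith [hs.1.le]
          nlinarith [Real.exp_pos (-β * (s - t')), norm_nonneg (Z (φ k) s)]
        calc ‖B s (Z (φ k) s) + g s‖ ≤ ‖B s (Z (φ k) s)‖ + ‖g s‖ := norm_add_le _ _
          _ ≤ ‖B s‖ * ‖Z (φ k) s‖ + ‖g s‖ := by gcongr; exact (B s).le_opNorm _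
          _ ≤ ‖B s‖ * K + ‖g s‖ := by gcongr
      · exact ((hB.norm.mul continuous_const).add hg.norm).intervalIntegrable _ _
      · refine Filter.Eventually.of_forall fun s hs => ?_
        rw [huIoc] at hs
        exact (((B s).continuous.tendsto _).comp (hVt s hs.1.le)).add tendsto_const_nhds
    have hlim2 : Tendsto (fun k => Z (φ k) t' + ∫ s in t'..t, (B s (Z (φ k) s) + g s)) atTop
        (nhds (Z₀ + ∫ s in t'..t, (B s (V s) + g s))) := hconv'.add hIlim
    have heq : (fun k => Z (φ k) t) =
        fun k => Z (φ k) t' + ∫ s in t'..t, (B s (Z (φ k) s) + g s) :=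
      funext fun k => hint (φ k) t ht
    rw [heq] at hlim1
    exact tendsto_nhds_unique hlim1 hlim2
  -- exponential bound on V
  have hVbd : ∀ t, t' ≤ t → ‖V t‖ ≤ K * Real.exp (-β * (t - t')) := by
    intro t ht
    refine le_of_tendsto (hVt t ht).norm ?_
    filter_upwards [hφtop.eventually_ge_atTop t] with k hk
    exact hbd (φ k) t ⟨ht, hk⟩
  -- extend to a globally defined solution W
  set F : ℝ → Fin N → ℝ := fun s => B (max s t') (V (max s t')) + g (max s t') with hF_def
  have hmaxc : Continuous fun s : ℝ => max s t' := continuous_id.max continuous_const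
  have hFcont : Continuous F := by
    have h1 : ContinuousOn (fun u => B u (V u) + g u) (Set.Ici t') :=
      (hB.continuousOn.clm_apply hVcont).add hg.continuousOn
    exact h1.comp_continuous hmaxc (fun x => Set.mem_Ici.mpr (le_max_right _ _))
  have hWV : ∀ t, t' ≤ t → Z₀ + (∫ s in t'..t, F s) = V t := by
    intro t ht
    have hIeq : (∫ s in t'..t, F s) = ∫ s in t'..t, (B s (V s) + g s) := by
      apply intervalIntegral.integral_congr
      intro s hs
      rw [Set.uIcc_of_le ht] at hs
      have hms : max s t' = s := max_eq_left hs.1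
      simp only [hF_def, hms]
    rw [hIeq, ← hVint t ht]
  have hWd : ∀ t : ℝ, HasDerivAt (fun u => Z₀ + ∫ s in t'..u, F s) (F t) t := by
    intro t
    exact (intervalIntegral.integral_hasDerivAt_right
      (hFcont.intervalIntegrable _ _)
      (hFcont.stronglyMeasurableAtFilter _ _)
      hFcont.continuousAt).const_add Z₀
  refine ⟨fun u => Z₀ + ∫ s in t'..u, F s, by simp, ?_, ?_⟩
  · intro t ht
    have hmt : max t t' = t := max_eq_left ht
    have hFt : F t = B t ((fun u => Z₀ + ∫ s in t'..u, F s) t) + g t := by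
      simp only [hF_def, hmt]
      rw [hWV t ht]
    rw [show (B t) ((fun u => Z₀ + ∫ s in t'..u, F s) t) + g t = F t from hFt.symm]
    exact hWd t
  · intro t ht
    rw [show (fun u => Z₀ + ∫ s in t'..u, F s) t = V t from hWV t ht]
    exact hVbd t ht
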